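/- Let C1, C2, C3 ∈ R^{2,1} be three points with pairwise non-light-like differences, and let A(u) be the rational quadratic interpolant with weights w1 = 2‖C2−C3‖_M, w2 = −‖C1−C3‖_M, w3 = 2‖C1−C2‖_M (where ‖v‖_M := ⟨v,v⟩_M). Write A in homogeneous coordinates as Ã(u) = (ã_w(u) : ã_x(u) : ã_y(u) : ã_r(u)), with ã_w(u) = w1(u−1)(u−1/2) + w2 u(u−1) + w3 u(u−1/2) and the numerator components likewise. Then there exist real constants q0, q1, q2 such that ã_x(u)^2 + ã_y(u)^2 − ã_r(u)^2 = (q0 + q1 u + q2 u^2)·ã_w(u) identically in u; i.e., the quartic polynomial ã_x^2 + ã_y^2 − ã_r^2 is divisible by the quadratic ã_w. -/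
import Mathlib


/-- The Minkowski inner product on `ℝ^{2,1}`. -/
def minkInner (v w : Fin 3 → ℝ) : ℝ := v 0 * w 0 + v 1 * w 1 - v 2 * w 2

/-- For the homogeneous rational quadratic interpolant of three points of `ℝ^{2,1}`
with pairwise non-light-like differences and the weights
`w1 = 2‖C2−C3‖_M`, `w2 = −‖C1−C3‖_M`, `w3 = 2‖C1−C2‖_M`, the quartic polynomial
`ã_x² + ã_y² − ã_r²` is divisible by the quadratic weight polynomial `ã_w`;
i.e., the interpolant is a Minkowski arc. -/
theorem minkowski_arc_divisibility
    (C1 C2 C3 : Fin 3 → ℝ)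
    (h12 : minkInner (C1 - C2) (C1 - C2) ≠ 0)
    (h13 : minkInner (C1 - C3) (C1 - C3) ≠ 0)
    (h23 : minkInner (C2 - C3) (C2 - C3) ≠ 0)
    (w1 w2 w3 : ℝ)
    (hw1 : w1 = 2 * minkInner (C2 - C3) (C2 - C3))
    (hw2 : w2 = -minkInner (C1 - C3) (C1 - C3))
    (hw3 : w3 = 2 * minkInner (C1 - C2) (C1 - C2))
    (aw ax ay ar : ℝ → ℝ)
    (haw : ∀ u, aw u = w1 * ((u - 1) * (u - 1/2)) + w2 * (u * (u - 1)) + w3 * (u * (u - 1/2)))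
    (hax : ∀ u, ax u = w1 * C1 0 * ((u - 1) * (u - 1/2)) + w2 * C2 0 * (u * (u - 1)) +
      w3 * C3 0 * (u * (u - 1/2)))
    (hay : ∀ u, ay u = w1 * C1 1 * ((u - 1) * (u - 1/2)) + w2 * C2 1 * (u * (u - 1)) +
      w3 * C3 1 * (u * (u - 1/2)))
    (har : ∀ u, ar u = w1 * C1 2 * ((u - 1) * (u - 1/2)) + w2 * C2 2 * (u * (u - 1)) +
      w3 * C3 2 * (u * (u - 1/2))) :
    ∃ q0 q1 q2 : ℝ, ∀ u : ℝ,
      ax u ^ 2 + ay u ^ 2 - ar u ^ 2 = (q0 + q1 * u + q2 * u ^ 2) * aw u := by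
  set m1 := minkInner C1 C1 with hm1
  set m2 := minkInner C2 C2 with hm2
  set m3 := minkInner C3 C3 with hm3
  refine ⟨w1 * m1 / 2,
          -(3/2) * w1 * m1 - w2 * m2 - (1/2) * w3 * m3,
          w1 * m1 + w2 * m2 + w3 * m3, ?_⟩
  intro u
  rw [hax u, hay u, har u, haw u, hw1, hw2, hw3]
  simp only [hm1, hm2, hm3, hw1, hw2, hw3, minkInner, Pi.sub_apply]
  ring
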